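/- arXiv:1401.3534 — 4 statements merged into one kernel-verified Lean document; each statement's English description precedes it below -/
import Mathlib

section
/- Let A be an associative algebra over a field and τ : A → A a Rota–Baxter operator of weight 1, i.e., τ(a)τ(b) = τ(τ(a)b + aτ(b) + ab) for all a,b ∈ A. Define three bilinear products on A by a ≻ b := τ(a)b, a ≺ b := aτ(b), a ⊥ b := ab. Then (A, ≻, ≺, ⊥) is a tridendriform (post-associative) algebra, i.e., for all a,b,c ∈ A: (a≺b)≺c = a≺(b≺c + b≻c + b⊥c), (a≻b)≺c = a≻(b≺c), a≻(b≻c) = (a≺b + a≻b + a⊥b)≻c, (a≻b)⊥c = a≻(b⊥c), (a≺b)⊥c = a⊥(b≻c), (a⊥b)≺c = a⊥(b≺c), and (a⊥b)⊥c = a⊥(b⊥c). -/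
/-- A Rota–Baxter operator `τ` of weight 1 on an associative algebra `A` yields
a tridendriform (post-associative) algebra structure
`a ≻ b := τ(a)b`, `a ≺ b := aτ(b)`, `a ⊥ b := ab`. -/
theorem rotaBaxter_weight_one_tridendriform {k A : Type*} [Field k]
    [NonUnitalRing A] [Module k A] (hassoc : ∀ a b c : A, (a * b) * c = a * (b * c))
    (τ : A →ₗ[k] A) (hτ : ∀ a b : A, τ a * τ b = τ (τ a * b + a * τ b + a * b)) :
    (∀ a b c : A, (a * τ b) * τ c = a * τ (b * τ c + τ b * c + b * c)) ∧
    (∀ a b c : A, (τ a * b) * τ c = τ a * (b * τ c)) ∧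
    (∀ a b c : A, τ a * (τ b * c) = τ (a * τ b + τ a * b + a * b) * c) ∧
    (∀ a b c : A, (τ a * b) * c = τ a * (b * c)) ∧
    (∀ a b c : A, (a * τ b) * c = a * (τ b * c)) ∧
    (∀ a b c : A, (a * b) * τ c = a * (b * τ c)) ∧
    (∀ a b c : A, (a * b) * c = a * (b * c)) := by
  refine ⟨fun a b c => ?_, fun a b c => hassoc _ _ _, fun a b c => ?_,
    fun a b c => hassoc _ _ _, fun a b c => hassoc _ _ _, fun a b c => hassoc _ _ _,
    fun a b c => hassoc _ _ _⟩
  · rw [hassoc, hτ]; congr 2; abel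
  · rw [← hassoc, hτ]; congr 2; abel
end

section
/- Let D be a left-symmetric (pre-Lie) algebra over a field and P a Perm algebra. On the tensor product P ⊗ D define the bracket [x⊗a, y⊗b] := xy ⊗ (a·b) − yx ⊗ (b·a). Then P ⊗ D with this bracket is a Lie algebra (the bracket is alternating and satisfies the Jacobi identity). -/
open TensorProduct

private lemma sum_zero_aux {M : Type*} [AddCommGroup M] (a b : M)
    (ha : a = 0) (hb : b = 0) (c : M) (hc : c = a + b) : c = 0 := by
  rw [hc, ha, hb, add_zero]

private lemma sum_zero_aux3 {M : Type*} [AddCommGroup M] (a b d : M)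
    (ha : a = 0) (hb : b = 0) (hd : d = 0) (c : M) (hc : c = a + b + d) : c = 0 := by
  rw [hc, ha, hb, hd, add_zero, add_zero]

/-- If `D` is a left-symmetric (pre-Lie) algebra and `P` a Perm algebra over a
field `k`, then the bracket on `P ⊗ D` determined by
`[x⊗a, y⊗b] = xy ⊗ a·b − yx ⊗ b·a` makes `P ⊗ D` a Lie algebra:
it is alternating and satisfies the Jacobi identity. -/
theorem perm_tensor_preLie_is_lie {k P D : Type*} [Field k]
    [NonUnitalRing P] [Module k P]
    (hperm : ∀ x y z : P, (x * y) * z = (y * x) * z)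
    [AddCommGroup D] [Module k D] (mul : D →ₗ[k] D →ₗ[k] D)
    (hlsym : ∀ a b c : D,
      mul (mul a b) c - mul a (mul b c) = mul (mul b a) c - mul b (mul a c))
    (B : P ⊗[k] D →ₗ[k] P ⊗[k] D →ₗ[k] P ⊗[k] D)
    (hB : ∀ (x y : P) (a b : D),
      B (x ⊗ₜ a) (y ⊗ₜ b) = (x * y) ⊗ₜ (mul a b) - (y * x) ⊗ₜ (mul b a)) :
    (∀ u : P ⊗[k] D, B u u = 0) ∧
    (∀ u v w : P ⊗[k] D, B (B u v) w + B (B v w) u + B (B w u) v = 0) := by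
  -- skew symmetry
  have hskew : ∀ u v : P ⊗[k] D, B u v + B v u = 0 := by
    intro u v
    induction u using TensorProduct.induction_on with
    | zero => simp
    | tmul x a =>
      induction v using TensorProduct.induction_on with
      | zero => simp
      | tmul y b => rw [hB, hB]; abel
      | add v1 v2 ih1 ih2 =>
        simp only [map_add, LinearMap.add_apply]
        rw [add_add_add_comm, ih1, ih2, add_zero]
    | add u1 u2 ih1 ih2 =>
      simp only [map_add, LinearMap.add_apply]
      rw [add_add_add_comm, ih1, ih2, add_zero]
  constructor
  · intro u
    induction u using TensorProduct.induction_on with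
    | zero => simp
    | tmul x a => rw [hB]; exact sub_self _
    | add u1 u2 ih1 ih2 =>
      simp only [map_add, LinearMap.add_apply]
      rw [add_add_add_comm, ih1, ih2, add_zero, zero_add]
      exact hskew u1 u2
  · intro u v w
    induction u using TensorProduct.induction_on with
    | zero => simp
    | add u1 u2 ih1 ih2 =>
      simp only [map_add, LinearMap.add_apply]
      refine sum_zero_aux _ _ ih1 ih2 _ ?_
      abel
    | tmul x a =>
      induction v using TensorProduct.induction_on with
      | zero => simp
      | add v1 v2 ih1 ih2 =>
        simp only [map_add, LinearMap.add_apply]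
        refine sum_zero_aux _ _ ih1 ih2 _ ?_
        abel
      | tmul y b =>
        induction w using TensorProduct.induction_on with
        | zero => simp
        | add w1 w2 ih1 ih2 =>
          simp only [map_add, LinearMap.add_apply]
          refine sum_zero_aux _ _ ih1 ih2 _ ?_
          abel
        | tmul z c =>
          -- the key computation on pure tensors
          have hD : ∀ a b c : D, mul (mul b a) c
              = mul (mul a b) c - mul a (mul b c) + mul b (mul a c) := by
            intro a b c
            have h := hlsym a b c
            apply eq_of_sub_eq_zero
            rw [show mul (mul b a) c -
                (mul (mul a b) c - mul a (mul b c) + mul b (mul a c))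
                = (mul (mul b a) c - mul b (mul a c))
                  - (mul (mul a b) c - mul a (mul b c)) from by abel, ← h,
              sub_self]
          simp only [hB, map_sub, LinearMap.sub_apply, hB]
          simp only [← mul_assoc]
          simp only [hperm y x z, hperm z y x, hperm x z y]
          rw [hD a b c, hD b c a, hD c a b]
          simp only [TensorProduct.tmul_sub, TensorProduct.tmul_add]
          abel
end

section
/- Let A be an associative algebra over a field and t : A → A an averaging operator, i.e., a linear map with t(a)t(b) = t(t(a)b) = t(a t(b)) for all a,b ∈ A. Define two bilinear products on A by a ⊣ b := a t(b) and a ⊢ b := t(a) b. Then (A, ⊣, ⊢) is an associative dialgebra: for all a,b,c ∈ A, a⊣(b⊣c) = (a⊣b)⊣c = a⊣(b⊢c), (a⊢b)⊣c = a⊢(b⊣c), and a⊢(b⊢c) = (a⊢b)⊢c = (a⊣b)⊢c. -/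
/-- An averaging operator `t` on an associative algebra `A` yields an
associative dialgebra structure `a ⊣ b := a t(b)`, `a ⊢ b := t(a) b`. -/
theorem averaging_gives_dialgebra {k A : Type*} [Field k] [NonUnitalRing A]
    [Module k A] (hassoc : ∀ a b c : A, (a * b) * c = a * (b * c))
    (t : A →ₗ[k] A)
    (ht1 : ∀ a b : A, t a * t b = t (t a * b))
    (ht2 : ∀ a b : A, t a * t b = t (a * t b)) :
    (∀ a b c : A, a * t (b * t c) = (a * t b) * t c) ∧
    (∀ a b c : A, a * t (b * t c) = a * t (t b * c)) ∧
    (∀ a b c : A, (t a * b) * t c = t a * (b * t c)) ∧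
    (∀ a b c : A, t a * (t b * c) = t (t a * b) * c) ∧
    (∀ a b c : A, t a * (t b * c) = t (a * t b) * c) := by
  refine ⟨fun a b c => ?_, fun a b c => ?_, fun a b c => ?_, fun a b c => ?_, fun a b c => ?_⟩
  · rw [← ht2, hassoc]
  · rw [← ht2, ← ht1]
  · rw [hassoc]
  · rw [← ht1, hassoc]
  · rw [← ht2, hassoc]
end

section
/- Let L be a Lie algebra over a field and t : L → L an averaging operator, i.e., [t(a), t(b)] = t([t(a), b]) = t([a, t(b)]) for all a,b ∈ L. Define a bilinear product on L by a * b := [a, t(b)]. Then (L, *) is a (right) Leibniz algebra: (a*b)*c = (a*c)*b + a*(b*c) for all a,b,c ∈ L. -/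
/-- An averaging operator `t` on a Lie algebra `L` yields a right Leibniz
algebra structure `a * b := [a, t(b)]`. -/
theorem averaging_lie_gives_leibniz {k L : Type*} [Field k] [LieRing L]
    [LieAlgebra k L] (t : L →ₗ[k] L)
    (ht1 : ∀ a b : L, ⁅t a, t b⁆ = t ⁅t a, b⁆)
    (ht2 : ∀ a b : L, ⁅t a, t b⁆ = t ⁅a, t b⁆) :
    ∀ a b c : L, ⁅⁅a, t b⁆, t c⁆ = ⁅⁅a, t c⁆, t b⁆ + ⁅a, t ⁅b, t c⁆⁆ := by
  intro a b c
  rw [← ht2, lie_lie a (t b) (t c), ← lie_skew (t b) ⁅a, t c⁆]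
  abel
end
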